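/- The function p ↦ σ²(4μ² + 2pσ² − p + 1)/(n p (1−p)) on (0,1) attains its minimum at p* = √(4μ²+1)/(√(4μ²+2σ²) + √(4μ²+1)). -/

import Mathlib

open Real Set

/-- The asymptotic risk p ↦ σ²(4μ² + 2pσ² − p + 1)/(n p (1−p)) on (0,1) attains its
minimum at p* = √(4μ²+1)/(√(4μ²+2σ²) + √(4μ²+1)). -/
theorem streaming_optimal_proportion (μ σ n : ℝ) (hσ : 0 < σ) (hn : 0 < n)
    (f : ℝ → ℝ)
    (hf : ∀ p, f p = σ ^ 2 * (4 * μ ^ 2 + 2 * p * σ ^ 2 - p + 1) / (n * p * (1 - p)))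
    (pstar : ℝ)
    (hpstar : pstar = Real.sqrt (4 * μ ^ 2 + 1) /
      (Real.sqrt (4 * μ ^ 2 + 2 * σ ^ 2) + Real.sqrt (4 * μ ^ 2 + 1))) :
    pstar ∈ Ioo (0 : ℝ) 1 ∧ ∀ p ∈ Ioo (0 : ℝ) 1, f pstar ≤ f p := by
  set a := Real.sqrt (4 * μ ^ 2 + 1) with ha_def
  set b := Real.sqrt (4 * μ ^ 2 + 2 * σ ^ 2) with hb_def
  have ha : 0 < a := Real.sqrt_pos.2 (by positivity)
  have hb : 0 < b := Real.sqrt_pos.2 (by positivity)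
  have ha2 : a ^ 2 = 4 * μ ^ 2 + 1 := Real.sq_sqrt (by positivity)
  have hb2 : b ^ 2 = 4 * μ ^ 2 + 2 * σ ^ 2 := Real.sq_sqrt (by positivity)
  have hs : (0:ℝ) < b + a := by linarith
  have h1 : pstar = a / (b + a) := hpstar
  have hp0 : 0 < pstar := h1 ▸ div_pos ha hs
  have hp1 : pstar < 1 := by rw [h1, div_lt_one hs]; linarith
  have h2 : 1 - pstar = b / (b + a) := by
    rw [h1]; field_simp; ring
  have num : ∀ q : ℝ, σ ^ 2 * (4 * μ ^ 2 + 2 * q * σ ^ 2 - q + 1)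
      = σ ^ 2 * (a ^ 2 * (1 - q) + b ^ 2 * q) := by
    intro q
    linear_combination (-(σ ^ 2 * (1 - q))) * ha2 + (-(σ ^ 2 * q)) * hb2
  refine ⟨⟨hp0, hp1⟩, ?_⟩
  rintro p ⟨hq0, hq1⟩
  rw [hf, hf, num, num]
  have hd1 : 0 < n * pstar * (1 - pstar) := by
    have : 0 < 1 - pstar := by linarith
    positivity
  have hd2 : 0 < n * p * (1 - p) := by
    have : 0 < 1 - p := by linarith
    positivity
  rw [div_le_div_iff₀ hd1 hd2]
  have e1 : a ^ 2 * (1 - pstar) + b ^ 2 * pstar = a * b := by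
    rw [h2, h1]; field_simp; ring
  have e2 : pstar * (1 - pstar) = a * b / (b + a) ^ 2 := by
    rw [h2, h1]; field_simp
  have key : (a ^ 2 * (1 - pstar) + b ^ 2 * pstar) * (p * (1 - p))
      ≤ (a ^ 2 * (1 - p) + b ^ 2 * p) * (pstar * (1 - pstar)) := by
    rw [e1, e2, ← mul_div_assoc, le_div_iff₀ (by positivity)]
    nlinarith [mul_nonneg (mul_pos ha hb).le (sq_nonneg (a * (1 - p) - b * p))]
  nlinarith [mul_le_mul_of_nonneg_left key (show (0:ℝ) ≤ σ ^ 2 * n by positivity)]
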